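/- Let |n| < 1 and (α,p) ∈ K_{|n|}. Let Ω₁ ⊂ ℝ^d be open and u, w, z ∈ C¹(Ω₁) with u > 0 on Ω₁. For η ∈ (0,1), let v_η be a function satisfying ‖v_η − (u + ηw + η²z)‖_{C¹(Ω₁)} = o(η²) as η → 0. Then at every point of Ω₁, J_η(v_η,u) := η^{−2} (∇v_η, ∇u)ᵀ Q_{α,p}(v_η, u) (∇v_η, ∇u) converges as η → 0 to J₀ = u^{γ−2} (u∇w, w∇u)ᵀ M_{α,p} (u∇w, w∇u). -/

import Mathlib

open MeasureTheory Set Filter Topology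

noncomputable section

/-- The critical exponent `P₋(α) = 1 + (2/n²)(1-α)(α - √(α²-n²))`. -/
def Pminus (n a : ℝ) : ℝ := 1 + (2 / n ^ 2) * (1 - a) * (a - Real.sqrt (a ^ 2 - n ^ 2))

/-- The critical exponent `P₊(α) = 1 + (2/n²)(1-α)(α + √(α²-n²))`. -/
def Pplus (n a : ℝ) : ℝ := 1 + (2 / n ^ 2) * (1 - a) * (a + Real.sqrt (a ^ 2 - n ^ 2))

/-- The admissible set `K_{|n|}` of pairs `(α,p)`. -/
def Kset (n : ℝ) : Set (ℝ × ℝ) :=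
  if n = 0 then {q | 0 < q.1 ∧ q.1 ≤ 1 ∧ 1 ≤ q.1 * q.2}
  else {q | |n| ≤ q.1 ∧ q.1 ≤ 1 ∧ Pminus n q.1 ≤ q.2 ∧ q.2 ≤ Pplus n q.1}

/-- The symmetric matrix `Q_{α,p}(v,u)`, with `γ = n/α`, `Γ = (1-α)/(α(p-1))`,
and the convention `Q_{1,1} = 0`. -/
def Qmat (n a p v u : ℝ) : Matrix (Fin 2) (Fin 2) ℝ :=
  if a = 1 ∧ p = 1 then 0 else
  (p - 1) • !![v ^ (n / a) * (1 + ((1 - a) / (a * (p - 1))) * (u / v - 1)),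
      -(v ^ (n / a) + u ^ (n / a)) / 2;
      -(v ^ (n / a) + u ^ (n / a)) / 2,
      u ^ (n / a) * (1 + ((1 - a) / (a * (p - 1))) * (v / u - 1))]

/-- The symmetric matrix `M_{α,p}`, with `γ = n/α`, `Γ = (1-α)/(α(p-1))`,
and the convention `M_{1,1} = 0`. -/
def Mmat (n a p : ℝ) : Matrix (Fin 2) (Fin 2) ℝ :=
  if a = 1 ∧ p = 1 then 0 else
  (p - 1) • !![(1 : ℝ), -((1 - a) / (a * (p - 1))) + (n / a) / 2;
      -((1 - a) / (a * (p - 1))) + (n / a) / 2,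
      ((1 - a) / (a * (p - 1))) * (1 - n / a)]

abbrev Euc (d : ℕ) := EuclideanSpace ℝ (Fin d)

/-- The quadratic form `(X,Y)ᵀ A (X,Y) = A₁₁|X|² + 2A₁₂ X·Y + A₂₂|Y|²`. -/
def quadForm {d : ℕ} (A : Matrix (Fin 2) (Fin 2) ℝ) (X Y : Euc d) : ℝ :=
  A 0 0 * ‖X‖ ^ 2 + 2 * A 0 1 * (inner ℝ X Y : ℝ) + A 1 1 * ‖Y‖ ^ 2


section Aux

open Filter Topology Set

private lemma slope_mul_lim (f : ℝ → ℝ) {f' U : ℝ} (hf : HasDerivAt f f' U) {l : Filter ℝ}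
    {V : ℝ → ℝ} (hVU : Tendsto V l (𝓝 U)) {W : ℝ}
    (hV : Tendsto (fun η => (V η - U) / η) l (𝓝 W)) :
    Tendsto (fun η => (f (V η) - f U) / η) l (𝓝 (f' * W)) := by
  set φ : ℝ → ℝ := fun t => if t = U then f' else (f t - f U) / (t - U) with hφ
  have hkey : ∀ η, (f (V η) - f U) / η = φ (V η) * ((V η - U) / η) := by
    intro η
    by_cases h : V η = U
    · simp [φ, h]
    · simp only [φ, if_neg h]
      rw [div_mul_div_comm, mul_comm (f (V η) - f U) (V η - U),
        mul_div_mul_left _ _ (sub_ne_zero.mpr h)]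
  have hφc : Tendsto φ (𝓝 U) (𝓝 f') := by
    rw [← nhdsNE_sup_pure U]
    refine tendsto_sup.mpr ⟨?_, ?_⟩
    · refine (hasDerivAt_iff_tendsto_slope.mp hf).congr' ?_
      filter_upwards [self_mem_nhdsWithin] with t ht
      simp only [Set.mem_compl_iff, Set.mem_singleton_iff] at ht
      simp [φ, if_neg ht, slope_def_field]
    · have h1 : φ U = f' := if_pos rfl
      simpa [h1] using tendsto_pure_nhds φ U
  exact ((hφc.comp hVU).mul hV).congr fun η => (hkey η).symm

private lemma Kset_facts {n α p : ℝ} (hK : (α, p) ∈ Kset n)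
    (h : ¬(α = 1 ∧ p = 1)) : 0 < α ∧ α ≤ 1 ∧ 1 < p := by
  by_cases hn : n = 0
  · rw [Kset, if_pos hn] at hK
    obtain ⟨h1, h2, h3⟩ := hK
    refine ⟨h1, h2, ?_⟩
    by_contra hp
    push_neg at hp
    exact h ⟨by nlinarith, by nlinarith⟩
  · rw [Kset, if_neg hn] at hK
    obtain ⟨h1, h2, h3, h4⟩ := hK
    have hn2 : 0 < n ^ 2 := by positivity
    have hα0 : 0 < α := lt_of_lt_of_le (abs_pos.mpr hn) h1
    refine ⟨hα0, h2, ?_⟩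
    rcases eq_or_lt_of_le h2 with hα1 | hα1
    · exfalso
      apply h
      subst hα1
      rw [Pminus] at h3
      rw [Pplus] at h4
      norm_num at h3 h4
      exact ⟨rfl, le_antisymm h4 h3⟩
    · have hs : Real.sqrt (α ^ 2 - n ^ 2) < α := by
        rw [Real.sqrt_lt' hα0]
        nlinarith
      have hpos : 0 < (2 / n ^ 2) * (1 - α) * (α - Real.sqrt (α ^ 2 - n ^ 2)) := by
        apply mul_pos (mul_pos (by positivity) (by linarith)) (by linarith)
      have := h3
      rw [Pminus] at this
      linarith

end Aux

set_option maxHeartbeats 1600000 in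
/-- Lemma: limit of the quadratic term: let `|n| < 1`,
`(α,p) ∈ K_{|n|}`, `Ω₁ ⊆ ℝ^d` open, `u, w, z ∈ C¹(Ω₁)` with `u > 0` on `Ω₁`, and for
`η ∈ (0,1)` let `v_η ∈ C¹(Ω₁)` satisfy `‖v_η - (u + ηw + η²z)‖_{C¹(Ω₁)} = o(η²)`
(encoded by a bound `ε(η)` with `ε(η)/η² → 0` as `η → 0⁺`). Then at every point of `Ω₁`,
`J_η(v_η,u) = η⁻² (∇v_η,∇u)ᵀ Q_{α,p}(v_η,u) (∇v_η,∇u)` converges as `η → 0⁺` to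
`J₀ = u^{γ-2} (u∇w, w∇u)ᵀ M_{α,p} (u∇w, w∇u)`. -/
theorem limit_of_quadratic_term (d : ℕ) (hd : 1 ≤ d) (n α p : ℝ) (hn1 : |n| < 1)
    (hK : (α, p) ∈ Kset n)
    (Ω₁ : Set (Euc d)) (hΩ₁ : IsOpen Ω₁)
    (u w z : Euc d → ℝ)
    (hu : ContDiffOn ℝ 1 u Ω₁) (hw : ContDiffOn ℝ 1 w Ω₁) (hz : ContDiffOn ℝ 1 z Ω₁)
    (hupos : ∀ x ∈ Ω₁, 0 < u x)
    (v : ℝ → Euc d → ℝ) (hv : ∀ η ∈ Ioo (0:ℝ) 1, ContDiffOn ℝ 1 (v η) Ω₁)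
    (ε : ℝ → ℝ)
    (hε : Tendsto (fun η => ε η / η ^ 2) (𝓝[>] (0:ℝ)) (𝓝 0))
    (happrox : ∀ η ∈ Ioo (0:ℝ) 1, ∀ x ∈ Ω₁,
      |v η x - (u x + η * w x + η ^ 2 * z x)| ≤ ε η ∧
      ‖gradient (v η) x - (gradient u x + η • gradient w x + η ^ 2 • gradient z x)‖ ≤ ε η) :
    ∀ x ∈ Ω₁,
      Tendsto (fun η : ℝ =>
          (η ^ 2)⁻¹ * quadForm (Qmat n α p (v η x) (u x)) (gradient (v η) x) (gradient u x))
        (𝓝[>] (0:ℝ))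
        (𝓝 (u x ^ (n / α - 2) *
          quadForm (Mmat n α p) (u x • gradient w x) (w x • gradient u x))) := by
  intro x hx
  by_cases htriv : α = 1 ∧ p = 1
  · simp only [Qmat, Mmat, if_pos htriv, quadForm, Matrix.zero_apply, zero_mul, mul_zero,
      add_zero, zero_add]
    exact tendsto_const_nhds
  obtain ⟨hα0, hα1, hp⟩ := Kset_facts hK htriv
  have hp1 : (0:ℝ) < p - 1 := by linarith
  have hU : 0 < u x := hupos x hx
  set l := 𝓝[>] (0:ℝ) with hl
  set U : ℝ := u x with hUdef
  set Y : Euc d := gradient u x with hYdef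
  set W : ℝ := w x with hWdef
  set GW : Euc d := gradient w x with hGWdef
  set Z : ℝ := z x with hZdef
  set GZ : Euc d := gradient z x with hGZdef
  have hmem : ∀ᶠ η in l, η ∈ Set.Ioo (0:ℝ) 1 := Ioo_mem_nhdsGT_of_mem ⟨le_refl 0, one_pos⟩
  have hpos : ∀ᶠ η in l, 0 < η := self_mem_nhdsWithin
  have hη0 : Tendsto (fun η : ℝ => η) l (𝓝 0) := tendsto_id.mono_right nhdsWithin_le_nhds
  have hεη : Tendsto (fun η => ε η / η) l (𝓝 0) := by
    have h := hε.mul hη0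
    rw [mul_zero] at h
    refine h.congr' ?_
    filter_upwards [hpos] with η hη
    have hne : η ≠ 0 := ne_of_gt hη
    field_simp
  have hev1 : ∀ᶠ η in l, |v η x - (U + η * W + η ^ 2 * Z)| ≤ ε η := by
    filter_upwards [hmem] with η hη
    exact (happrox η hη x hx).1
  have hev2 : ∀ᶠ η in l, ‖gradient (v η) x - (Y + η • GW + η ^ 2 • GZ)‖ ≤ ε η := by
    filter_upwards [hmem] with η hη
    exact (happrox η hη x hx).2
  have herr1 : Tendsto (fun η => (v η x - (U + η * W + η ^ 2 * Z)) / η) l (𝓝 0) := by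
    apply squeeze_zero_norm' ?_ hεη
    filter_upwards [hev1, hpos] with η h1 h2
    rw [Real.norm_eq_abs, abs_div, abs_of_pos h2]
    gcongr
  have L1 : Tendsto (fun η => (v η x - U) / η) l (𝓝 W) := by
    have h := ((tendsto_const_nhds (x := W)).add (hη0.mul (tendsto_const_nhds (x := Z)))).add herr1
    rw [zero_mul, add_zero, add_zero] at h
    refine h.congr' ?_
    filter_upwards [hpos] with η hη
    have hne : η ≠ 0 := ne_of_gt hη
    field_simp
    ring
  have herr2 : Tendsto (fun η => η⁻¹ • (gradient (v η) x - (Y + η • GW + η ^ 2 • GZ))) l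
      (𝓝 0) := by
    apply squeeze_zero_norm' ?_ hεη
    filter_upwards [hev2, hpos] with η h1 h2
    rw [norm_smul, Real.norm_eq_abs, abs_inv, abs_of_pos h2, div_eq_inv_mul]
    gcongr
  have L2 : Tendsto (fun η => η⁻¹ • (gradient (v η) x - Y)) l (𝓝 GW) := by
    have h := ((tendsto_const_nhds (x := GW)).add (hη0.smul (tendsto_const_nhds (x := GZ)))).add herr2
    rw [zero_smul, add_zero, add_zero] at h
    refine h.congr' ?_
    filter_upwards [hpos] with η hη
    have hne : η ≠ 0 := ne_of_gt hη
    match_scalars <;> field_simp <;> ring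
  have L3 : Tendsto (fun η => v η x) l (𝓝 U) := by
    have h := (L1.mul hη0).add (tendsto_const_nhds (x := U))
    rw [mul_zero, zero_add] at h
    refine h.congr' ?_
    filter_upwards [hpos] with η hη
    have hne : η ≠ 0 := ne_of_gt hη
    field_simp
    ring
  have hVpos : ∀ᶠ η in l, 0 < v η x := L3.eventually (eventually_gt_nhds hU)
  have L4 : Tendsto (fun η => gradient (v η) x) l (𝓝 Y) := by
    have h := (hη0.smul L2).add (tendsto_const_nhds (x := Y))
    rw [zero_smul, zero_add] at h
    refine h.congr' ?_
    filter_upwards [hpos] with η hη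
    have hne : η ≠ 0 := ne_of_gt hη
    rw [smul_smul, mul_inv_cancel₀ hne, one_smul, sub_add_cancel]
  have L5 : Tendsto (fun η => (v η x ^ (n / α) - U ^ (n / α)) / η) l
      (𝓝 (n / α * U ^ (n / α - 1) * W)) :=
    slope_mul_lim _ (Real.hasDerivAt_rpow_const (Or.inl hU.ne')) L3 L1
  have L6 : Tendsto (fun η => (v η x ^ (n / α - 1) - U ^ (n / α - 1)) / η) l
      (𝓝 ((n / α - 1) * U ^ (n / α - 1 - 1) * W)) :=
    slope_mul_lim _ (Real.hasDerivAt_rpow_const (Or.inl hU.ne')) L3 L1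
  have L7 : Tendsto (fun η => v η x ^ (n / α)) l (𝓝 (U ^ (n / α))) :=
    ((Real.continuousAt_rpow_const U (n / α) (Or.inl hU.ne')).tendsto).comp L3
  have L8 : Tendsto (fun η => ‖gradient (v η) x‖ ^ 2) l (𝓝 (‖Y‖ ^ 2)) := L4.norm.pow 2
  have TFval : Tendsto (fun η =>
      (p - 1) * ((inner ℝ ((v η x ^ (n / α)) • (η⁻¹ • (gradient (v η) x - Y)) +
          ((v η x ^ (n / α) - U ^ (n / α)) / η) • Y) (η⁻¹ • (gradient (v η) x - Y)) : ℝ) +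
        ((1 - α) / (α * (p - 1)) * -((v η x - U) / η)) *
          ((v η x ^ (n / α - 1) - U ^ (n / α - 1)) / η * ‖gradient (v η) x‖ ^ 2 +
            U ^ (n / α - 1) *
              (inner ℝ (η⁻¹ • (gradient (v η) x - Y)) (gradient (v η) x + Y) : ℝ)))) l
      (𝓝 ((p - 1) * ((inner ℝ ((U ^ (n / α)) • GW + (n / α * U ^ (n / α - 1) * W) • Y) GW : ℝ) +
        ((1 - α) / (α * (p - 1)) * -W) *
          ((n / α - 1) * U ^ (n / α - 1 - 1) * W * ‖Y‖ ^ 2 +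
            U ^ (n / α - 1) * (inner ℝ GW (Y + Y) : ℝ))))) :=
    tendsto_const_nhds.mul
      ((((L7.smul L2).add (L5.smul tendsto_const_nhds)).inner L2).add
        (((tendsto_const_nhds.mul L1.neg)).mul
          ((L6.mul L8).add (tendsto_const_nhds.mul (L2.inner (L4.add tendsto_const_nhds))))))
  have hkey : (p - 1) * ((inner ℝ ((U ^ (n / α)) • GW + (n / α * U ^ (n / α - 1) * W) • Y) GW : ℝ) +
        ((1 - α) / (α * (p - 1)) * -W) *
          ((n / α - 1) * U ^ (n / α - 1 - 1) * W * ‖Y‖ ^ 2 +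
            U ^ (n / α - 1) * (inner ℝ GW (Y + Y) : ℝ))) =
      U ^ (n / α - 2) * quadForm (Mmat n α p) (U • GW) (W • Y) := by
    simp only [quadForm, Mmat, if_neg htriv, Matrix.smul_apply, Matrix.cons_val', Matrix.cons_val_zero,
      Matrix.cons_val_one, Matrix.head_cons, Matrix.head_fin_const, Matrix.empty_val',
      Matrix.cons_val_fin_one, Matrix.of_apply, smul_eq_mul]
    simp only [inner_add_left, inner_add_right, real_inner_smul_left, real_inner_smul_right,
      real_inner_self_eq_norm_sq, real_inner_comm Y GW]
    rw [norm_smul, norm_smul, Real.norm_eq_abs, Real.norm_eq_abs, mul_pow, mul_pow, sq_abs, sq_abs]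
    rw [show n / α - 2 = n / α - 1 - 1 by ring]
    simp only [Real.rpow_sub_one hU.ne']
    field_simp
    ring
  rw [hkey] at TFval
  refine Tendsto.congr' ?_ TFval
  filter_upwards [hpos, hVpos] with η hη hVp
  have hne : η ≠ 0 := ne_of_gt hη
  have hVne : v η x ≠ 0 := ne_of_gt hVp
  simp only [quadForm, Qmat, if_neg htriv, Matrix.smul_apply, Matrix.cons_val', Matrix.cons_val_zero,
    Matrix.cons_val_one, Matrix.head_cons, Matrix.head_fin_const, Matrix.empty_val',
    Matrix.cons_val_fin_one, Matrix.of_apply, smul_eq_mul]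
  simp only [inner_add_left, inner_add_right, inner_sub_left, inner_sub_right,
    real_inner_smul_left, real_inner_smul_right, real_inner_self_eq_norm_sq,
    real_inner_comm Y (gradient (v η) x)]
  simp only [Real.rpow_sub_one hU.ne', Real.rpow_sub_one hVne]
  field_simp
  ring
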